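/- Under the standing assumptions, for every θ ∈ ℝ^d, every 0 < λ < 1 and every ε_h ∈ (0,1/2], the derivative of the tamed coefficient satisfies the polynomial growth bound ‖∇h_λ(θ)‖ ≤ K_{∇,ε_h} (1+|θ|)^{(l+1)/ε_h + l}, where K_{∇,ε_h} := (10√2 + 4/ε_h)(l+1)² · max{K_H, L, K_h, a, ‖∇h_λ(0)‖, 1}. -/

import Mathlib

set_option maxHeartbeats 2000000
set_option synthInstance.maxHeartbeats 1000000

open Real

theorem kTULA_tamed_deriv_polygrowth
    {d : ℕ} (hd : 0 < d)
    (u : EuclideanSpace ℝ (Fin d) → ℝ) (hu : ContDiff ℝ 3 u)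
    (h : EuclideanSpace ℝ (Fin d) → EuclideanSpace ℝ (Fin d))
    (H : EuclideanSpace ℝ (Fin d) →
      EuclideanSpace ℝ (Fin d) →L[ℝ] EuclideanSpace ℝ (Fin d))
    (hgrad : ∀ θ, h θ = gradient u θ)
    (hHess : ∀ θ, H θ = fderiv ℝ (gradient u) θ)
    (L K_H K_h a b : ℝ)
    (hL : 0 < L) (hK_H : 0 < K_H) (hK_h : 0 < K_h) (ha : 0 < a) (hb : 0 < b)
    (l : ℕ) (hl : 1 ≤ l)
    (hH_lip : ∀ θ θ' : EuclideanSpace ℝ (Fin d),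
      ‖H θ - H θ'‖ ≤ L * (1 + ‖θ‖ + ‖θ'‖) ^ (l - 1) * ‖θ - θ'‖)
    (hH_bd : ∀ θ : EuclideanSpace ℝ (Fin d), ‖H θ‖ ≤ K_H * (1 + ‖θ‖ ^ l))
    (hh_bd : ∀ θ : EuclideanSpace ℝ (Fin d), ‖h θ‖ ≤ K_h * (1 + ‖θ‖ ^ (l + 1)))
    (hdiss : ∀ θ : EuclideanSpace ℝ (Fin d), a * ‖θ‖ ^ 2 - b ≤ (inner ℝ (h θ) θ : ℝ))
    (hlam : ℝ → ℝ → EuclideanSpace ℝ (Fin d) → EuclideanSpace ℝ (Fin d))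
    (hlam_def : ∀ (lam eps : ℝ) (θ : EuclideanSpace ℝ (Fin d)),
      hlam lam eps θ =
        a • θ + ((1 + lam * ‖θ‖ ^ (((l : ℝ) + 1) / eps)) ^ eps)⁻¹ • (h θ - a • θ)) :
    ∀ (θ : EuclideanSpace ℝ (Fin d)) (lam eps : ℝ),
      0 < lam → lam < 1 → 0 < eps → eps ≤ 1 / 2 →
      ‖fderiv ℝ (hlam lam eps) θ‖ ≤
        (10 * Real.sqrt 2 + 4 / eps) * ((l : ℝ) + 1) ^ 2 *
          max (max (max (max (max K_H L) K_h) a) ‖fderiv ℝ (hlam lam eps) 0‖) 1 *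
          (1 + ‖θ‖) ^ (((l : ℝ) + 1) / eps + l) := by
  intro θ lam eps hlam0 hlam1 heps0 heps2
  -- h is differentiable with derivative H
  have hgu : h = gradient u := funext hgrad
  have hcd2 : ContDiff ℝ 2 (gradient u) := by
    have hfd : ContDiff ℝ 2 (fderiv ℝ u) := hu.fderiv_right (by norm_num)
    have : gradient u = fun x => (InnerProductSpace.toDual ℝ (EuclideanSpace ℝ (Fin d))).symm (fderiv ℝ u x) := rfl
    rw [this]
    exact (InnerProductSpace.toDual ℝ (EuclideanSpace ℝ (Fin d))).symm.contDiff.comp hfd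
  have hdiffh : Differentiable ℝ h := by
    rw [hgu]; exact hcd2.differentiable (by norm_num)
  have hHat : ∀ x : EuclideanSpace ℝ (Fin d), HasFDerivAt h (H x) x := by
    intro x
    have h1 := (hdiffh x).hasFDerivAt
    have h2 : fderiv ℝ h x = H x := by rw [hgu, ← hHess]
    rwa [h2] at h1
  -- notation
  set p : ℝ := ((l : ℝ) + 1) / eps with hp_def
  set q : ℝ := p / 2 with hq_def
  have hepsne : eps ≠ 0 := ne_of_gt heps0
  have hl1 : (2 : ℝ) ≤ (l : ℝ) + 1 := by
    have : (1 : ℝ) ≤ (l : ℝ) := by exact_mod_cast hl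
    linarith
  have hinve : (2 : ℝ) ≤ 1 / eps := by
    rw [le_div_iff₀ heps0]; linarith
  have hp4 : (4 : ℝ) ≤ p := by
    have : ((l : ℝ) + 1) * 2 ≤ ((l : ℝ) + 1) * (1 / eps) := by
      apply mul_le_mul_of_nonneg_left hinve; linarith
    calc (4:ℝ) ≤ ((l : ℝ) + 1) * 2 := by linarith
      _ ≤ ((l : ℝ) + 1) * (1 / eps) := this
      _ = p := by rw [hp_def]; ring
  have hq1 : (1 : ℝ) ≤ q := by rw [hq_def]; linarith
  -- the scalar factor as a function of s = ‖x‖²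
  set φ : ℝ → ℝ := fun s => ((1 + lam * s ^ q) ^ eps)⁻¹ with hφ_def
  have hsq : ∀ x : EuclideanSpace ℝ (Fin d), ((‖x‖ ^ 2 : ℝ)) ^ q = ‖x‖ ^ p := by
    intro x
    rw [← Real.rpow_natCast ‖x‖ 2, ← Real.rpow_mul (norm_nonneg x)]
    rw [hq_def]; congr 1; ring
  have hg_eq : hlam lam eps = fun x : EuclideanSpace ℝ (Fin d) => a • x + φ (‖x‖ ^ 2) • (h x - a • x) := by
    funext x
    rw [hlam_def, hφ_def]
    simp only [hsq x]
    rfl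
  -- derivative of φ at s₀ = ‖θ‖²
  set s₀ : ℝ := ‖θ‖ ^ 2 with hs₀_def
  have hs₀0 : 0 ≤ s₀ := sq_nonneg _
  set w : ℝ := 1 + lam * s₀ ^ q with hw_def
  have hw1 : 1 ≤ w := by
    have : 0 ≤ lam * s₀ ^ q := mul_nonneg hlam0.le (Real.rpow_nonneg hs₀0 q)
    linarith
  have hw0 : 0 < w := lt_of_lt_of_le one_pos hw1
  have hwe1 : 1 ≤ w ^ eps := Real.one_le_rpow hw1 heps0.le
  have hwe0 : 0 < w ^ eps := lt_of_lt_of_le one_pos hwe1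
  have h1 : HasDerivAt (fun s : ℝ => s ^ q) (q * s₀ ^ (q - 1)) s₀ :=
    Real.hasDerivAt_rpow_const (Or.inr hq1)
  have h2 : HasDerivAt (fun s : ℝ => 1 + lam * s ^ q) (lam * (q * s₀ ^ (q - 1))) s₀ :=
    (h1.const_mul lam).const_add 1
  have h3 : HasDerivAt (fun t : ℝ => t ^ eps) (eps * w ^ (eps - 1)) w :=
    Real.hasDerivAt_rpow_const (Or.inl (ne_of_gt hw0))
  have h4 : HasDerivAt (fun t : ℝ => t⁻¹) (-((w ^ eps) ^ 2)⁻¹) (w ^ eps) :=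
    hasDerivAt_inv (ne_of_gt hwe0)
  have h34 : HasDerivAt (fun s : ℝ => ((1 + lam * s ^ q) ^ eps)⁻¹)
      (-((w ^ eps) ^ 2)⁻¹ * (eps * w ^ (eps - 1) * (lam * (q * s₀ ^ (q - 1))))) s₀ := by
    have hinner : HasDerivAt (fun s : ℝ => (1 + lam * s ^ q) ^ eps)
        (eps * w ^ (eps - 1) * (lam * (q * s₀ ^ (q - 1)))) s₀ := by
      have h3' : HasDerivAt (fun t : ℝ => t ^ eps) (eps * w ^ (eps - 1)) (1 + lam * s₀ ^ q) := h3
      exact h3'.comp s₀ h2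
    have := h4.comp s₀ hinner
    simpa [Function.comp_def] using this
  set φ' : ℝ := -((w ^ eps) ^ 2)⁻¹ * (eps * w ^ (eps - 1) * (lam * (q * s₀ ^ (q - 1)))) with hφ'_def
  have hφder : HasDerivAt φ φ' s₀ := h34
  -- derivative of x ↦ ‖x‖²
  have hns : HasFDerivAt (fun x : EuclideanSpace ℝ (Fin d) => (‖x‖ ^ 2 : ℝ)) ((2 : ℝ) • (innerSL ℝ θ)) θ := by
    have h0 := (hasFDerivAt_id θ).norm_sq
    have heq : ((2 : ℕ) • (innerSL ℝ θ) : EuclideanSpace ℝ (Fin d) →L[ℝ] ℝ) =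
        (2 : ℝ) • (innerSL ℝ θ) := by ext y; simp
    rw [← heq]
    simpa using h0
  set G : EuclideanSpace ℝ (Fin d) →L[ℝ] ℝ := φ' • ((2 : ℝ) • (innerSL ℝ θ)) with hG_def
  have hgder : HasFDerivAt (fun x : EuclideanSpace ℝ (Fin d) => φ (‖x‖ ^ 2)) G θ := by
    have := hφder.comp_hasFDerivAt θ hns
    simpa [Function.comp_def] using this
  -- total derivative
  have hF : HasFDerivAt (fun x : EuclideanSpace ℝ (Fin d) => h x - a • x)
      (H θ - a • ContinuousLinearMap.id ℝ (EuclideanSpace ℝ (Fin d))) θ :=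
    (hHat θ).sub ((hasFDerivAt_id θ).const_smul a)
  set D : EuclideanSpace ℝ (Fin d) →L[ℝ] EuclideanSpace ℝ (Fin d) :=
    a • ContinuousLinearMap.id ℝ (EuclideanSpace ℝ (Fin d)) +
      (φ s₀ • (H θ - a • ContinuousLinearMap.id ℝ (EuclideanSpace ℝ (Fin d))) + G.smulRight (h θ - a • θ)) with hD_def
  have htot : HasFDerivAt (hlam lam eps) D θ := by
    rw [hg_eq]
    exact ((hasFDerivAt_id θ).const_smul a).add (hgder.smul hF)
  rw [htot.fderiv]
  -- norm bounds
  set N : ℝ := 1 + ‖θ‖ with hN_def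
  have hN1 : (1 : ℝ) ≤ N := by have := norm_nonneg θ; rw [hN_def]; linarith
  have hN0 : (0 : ℝ) < N := lt_of_lt_of_le one_pos hN1
  set M : ℝ := max (max (max (max (max K_H L) K_h) a) ‖fderiv ℝ (hlam lam eps) 0‖) 1 with hM_def
  have hM1 : (1 : ℝ) ≤ M := le_max_right _ _
  have hMKH : K_H ≤ M := le_trans (le_max_left _ _) (le_trans (le_max_left _ _)
    (le_trans (le_max_left _ _) (le_trans (le_max_left _ _) (le_max_left _ _))))
  have hMKh : K_h ≤ M := le_trans (le_max_right _ _)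
    (le_trans (le_max_left _ _) (le_trans (le_max_left _ _) (le_max_left _ _)))
  have hMa : a ≤ M := le_trans (le_max_right _ _)
    (le_trans (le_max_left _ _) (le_max_left _ _))
  -- bound on φ s₀
  have hφ01 : 0 ≤ φ s₀ ∧ φ s₀ ≤ 1 := by
    constructor
    · exact inv_nonneg.mpr hwe0.le
    · rw [hφ_def]
      simp only [← hw_def]
      exact inv_le_one_of_one_le₀ hwe1
  -- bound on ‖G‖
  have hφ'bd : |φ'| ≤ ((l : ℝ) + 1) / 2 * lam * s₀ ^ (q - 1) := by
    have key : eps * q = ((l : ℝ) + 1) / 2 := by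
      rw [hq_def, hp_def]; field_simp
    have e1 : (((w ^ eps) ^ 2)⁻¹ : ℝ) ≤ 1 := inv_le_one_of_one_le₀ (by rw [sq]; nlinarith only [hwe1])
    have e2 : w ^ (eps - 1) ≤ 1 :=
      Real.rpow_le_one_of_one_le_of_nonpos hw1 (by linarith)
    have e2' : (0:ℝ) ≤ w ^ (eps - 1) := Real.rpow_nonneg hw0.le _
    have e6 : (0:ℝ) ≤ s₀ ^ (q - 1) := Real.rpow_nonneg hs₀0 _
    have habs : |φ'| = ((w ^ eps) ^ 2)⁻¹ * (eps * w ^ (eps - 1) * (lam * (q * s₀ ^ (q - 1)))) := by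
      rw [hφ'_def, abs_mul, abs_neg,
        abs_of_nonneg (show (0:ℝ) ≤ ((w ^ eps) ^ 2)⁻¹ by positivity),
        abs_of_nonneg (show (0:ℝ) ≤ eps * w ^ (eps - 1) * (lam * (q * s₀ ^ (q - 1))) by
          have : (0:ℝ) ≤ q := by linarith
          positivity)]
    rw [habs]
    calc ((w ^ eps) ^ 2)⁻¹ * (eps * w ^ (eps - 1) * (lam * (q * s₀ ^ (q - 1))))
        ≤ 1 * (eps * 1 * (lam * (q * s₀ ^ (q - 1)))) := by
          have hq0 : (0:ℝ) ≤ q := by linarith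
          gcongr
      _ = eps * q * (lam * s₀ ^ (q - 1)) := by ring
      _ = ((l : ℝ) + 1) / 2 * lam * s₀ ^ (q - 1) := by rw [key]; ring
  have hs₀exp : s₀ ^ (q - 1) * ‖θ‖ ≤ N ^ (p - 1) := by
    have e1 : s₀ ^ (q - 1) = ‖θ‖ ^ (p - 2) := by
      rw [hs₀_def, ← Real.rpow_natCast ‖θ‖ 2, ← Real.rpow_mul (norm_nonneg θ)]
      congr 1
      rw [hq_def]; ring
    have e2 : ‖θ‖ ^ (p - 2) ≤ N ^ (p - 2) :=
      Real.rpow_le_rpow (norm_nonneg θ) (by rw [hN_def]; linarith) (by linarith)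
    have e3 : ‖θ‖ ≤ N := by rw [hN_def]; linarith
    calc s₀ ^ (q - 1) * ‖θ‖ ≤ N ^ (p - 2) * N := by
          apply mul_le_mul (by rw [e1] at *; exact e2) e3 (norm_nonneg θ)
            (Real.rpow_nonneg hN0.le _)
      _ = N ^ (p - 2) * N ^ (1 : ℝ) := by rw [Real.rpow_one]
      _ = N ^ (p - 1) := by rw [← Real.rpow_add hN0]; ring_nf
  have hGbd : ‖G‖ ≤ ((l : ℝ) + 1) * N ^ (p - 1) := by
    rw [hG_def]
    calc ‖φ' • ((2 : ℝ) • (innerSL ℝ θ))‖ = |φ'| * (2 * ‖θ‖) := by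
          rw [norm_smul φ' ((2:ℝ) • (innerSL ℝ θ)), norm_smul (2:ℝ) (innerSL ℝ θ),
            Real.norm_eq_abs, Real.norm_eq_abs, abs_two, innerSL_apply_norm]
      _ ≤ ((l : ℝ) + 1) / 2 * lam * s₀ ^ (q - 1) * (2 * ‖θ‖) := by
          apply mul_le_mul_of_nonneg_right hφ'bd (by positivity)
      _ = ((l : ℝ) + 1) * lam * (s₀ ^ (q - 1) * ‖θ‖) := by ring
      _ ≤ ((l : ℝ) + 1) * 1 * (N ^ (p - 1)) := by
          apply mul_le_mul _ hs₀exp (by positivity) (by positivity)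
          apply mul_le_mul_of_nonneg_left hlam1.le (by positivity)
      _ = ((l : ℝ) + 1) * N ^ (p - 1) := by ring
  -- nat-pow to rpow bounds
  have hA : (1 : ℝ) ≤ N ^ (l : ℝ) := Real.one_le_rpow hN1 (by positivity)
  have hB : (1 : ℝ) ≤ N ^ ((l : ℝ) + 1) := Real.one_le_rpow hN1 (by positivity)
  have hnorml : ‖θ‖ ^ l ≤ N ^ (l : ℝ) := by
    rw [← Real.rpow_natCast ‖θ‖ l]
    exact Real.rpow_le_rpow (norm_nonneg θ) (by rw [hN_def]; linarith) (by positivity)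
  have hnorml1 : ‖θ‖ ^ (l + 1) ≤ N ^ ((l : ℝ) + 1) := by
    rw [← Real.rpow_natCast ‖θ‖ (l + 1)]
    push_cast
    exact Real.rpow_le_rpow (norm_nonneg θ) (by rw [hN_def]; linarith) (by positivity)
  have hnormθ : ‖θ‖ ≤ N ^ ((l : ℝ) + 1) := by
    calc ‖θ‖ ≤ N := by rw [hN_def]; linarith
      _ = N ^ (1 : ℝ) := (Real.rpow_one N).symm
      _ ≤ N ^ ((l : ℝ) + 1) := Real.rpow_le_rpow_of_exponent_le hN1 (by linarith)
  -- piece bounds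
  have hid : ‖a • ContinuousLinearMap.id ℝ (EuclideanSpace ℝ (Fin d))‖ ≤ a := by
    rw [norm_smul a (ContinuousLinearMap.id ℝ (EuclideanSpace ℝ (Fin d))), Real.norm_eq_abs,
      abs_of_pos ha]
    calc a * ‖ContinuousLinearMap.id ℝ (EuclideanSpace ℝ (Fin d))‖ ≤ a * 1 :=
        mul_le_mul_of_nonneg_left (ContinuousLinearMap.norm_id_le) ha.le
      _ = a := mul_one a
  have hHmid : ‖H θ - a • ContinuousLinearMap.id ℝ (EuclideanSpace ℝ (Fin d))‖ ≤ K_H * (1 + ‖θ‖ ^ l) + a := by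
    calc ‖H θ - a • ContinuousLinearMap.id ℝ (EuclideanSpace ℝ (Fin d))‖ ≤ ‖H θ‖ + ‖a • ContinuousLinearMap.id ℝ (EuclideanSpace ℝ (Fin d))‖ :=
        norm_sub_le _ _
      _ ≤ K_H * (1 + ‖θ‖ ^ l) + a := add_le_add (hH_bd θ) hid
  have hFbd : ‖h θ - a • θ‖ ≤ K_h * (1 + ‖θ‖ ^ (l + 1)) + a * ‖θ‖ := by
    calc ‖h θ - a • θ‖ ≤ ‖h θ‖ + ‖a • θ‖ := norm_sub_le _ _
      _ ≤ K_h * (1 + ‖θ‖ ^ (l + 1)) + a * ‖θ‖ := by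
          rw [norm_smul, Real.norm_eq_abs, abs_of_pos ha]
          exact add_le_add (hh_bd θ) le_rfl
  -- assemble
  have hX : N ^ (p - 1) * N ^ ((l : ℝ) + 1) = N ^ (p + (l : ℝ)) := by
    rw [← Real.rpow_add hN0]; ring_nf
  have hX1 : (1 : ℝ) ≤ N ^ (p + (l : ℝ)) := Real.one_le_rpow hN1 (by positivity)
  have hAX : N ^ (l : ℝ) ≤ N ^ (p + (l : ℝ)) :=
    Real.rpow_le_rpow_of_exponent_le hN1 (by linarith)
  have main : ‖D‖ ≤ ((3 : ℝ) * l + 7) * M * N ^ (p + (l : ℝ)) := by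
    have t1 : ‖D‖ ≤ a + (φ s₀ * ‖H θ - a • ContinuousLinearMap.id ℝ (EuclideanSpace ℝ (Fin d))‖ +
        ‖G‖ * ‖h θ - a • θ‖) := by
      rw [hD_def]
      calc ‖a • ContinuousLinearMap.id ℝ (EuclideanSpace ℝ (Fin d)) +
            (φ s₀ • (H θ - a • ContinuousLinearMap.id ℝ (EuclideanSpace ℝ (Fin d))) + G.smulRight (h θ - a • θ))‖
          ≤ ‖a • ContinuousLinearMap.id ℝ (EuclideanSpace ℝ (Fin d))‖ +
            (‖φ s₀ • (H θ - a • ContinuousLinearMap.id ℝ (EuclideanSpace ℝ (Fin d)))‖ + ‖G.smulRight (h θ - a • θ)‖) := by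
            exact le_trans (norm_add_le _ _) (by gcongr; exact norm_add_le _ _)
        _ ≤ a + (φ s₀ * ‖H θ - a • ContinuousLinearMap.id ℝ (EuclideanSpace ℝ (Fin d))‖ + ‖G‖ * ‖h θ - a • θ‖) := by
            apply add_le_add hid
            apply add_le_add
            · rw [norm_smul (φ s₀) (H θ - a • ContinuousLinearMap.id ℝ (EuclideanSpace ℝ (Fin d))),
                Real.norm_eq_abs, abs_of_nonneg hφ01.1]
            · rw [ContinuousLinearMap.norm_smulRight_apply]
    have t2 : φ s₀ * ‖H θ - a • ContinuousLinearMap.id ℝ (EuclideanSpace ℝ (Fin d))‖ ≤ 3 * M * N ^ (p + (l : ℝ)) := by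
      calc φ s₀ * ‖H θ - a • ContinuousLinearMap.id ℝ (EuclideanSpace ℝ (Fin d))‖
          ≤ 1 * (K_H * (1 + ‖θ‖ ^ l) + a) :=
            mul_le_mul hφ01.2 hHmid (norm_nonneg _) zero_le_one
        _ = K_H * (1 + ‖θ‖ ^ l) + a := one_mul _
        _ ≤ M * (N ^ (l : ℝ) + N ^ (l : ℝ)) + M * N ^ (l : ℝ) := by
            apply add_le_add
            · apply mul_le_mul hMKH (add_le_add hA hnorml) (by positivity) (by linarith)
            · calc a ≤ M := hMa
                _ = M * 1 := (mul_one M).symm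
                _ ≤ M * N ^ (l : ℝ) := by
                    apply mul_le_mul_of_nonneg_left hA (by linarith)
        _ = 3 * M * N ^ (l : ℝ) := by ring
        _ ≤ 3 * M * N ^ (p + (l : ℝ)) := by
            apply mul_le_mul_of_nonneg_left hAX (by positivity <;> linarith)
    have t3 : ‖G‖ * ‖h θ - a • θ‖ ≤ 3 * ((l : ℝ) + 1) * M * N ^ (p + (l : ℝ)) := by
      have hF3 : ‖h θ - a • θ‖ ≤ 3 * M * N ^ ((l : ℝ) + 1) := by
        calc ‖h θ - a • θ‖ ≤ K_h * (1 + ‖θ‖ ^ (l + 1)) + a * ‖θ‖ := hFbd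
          _ ≤ M * (N ^ ((l : ℝ) + 1) + N ^ ((l : ℝ) + 1)) + M * N ^ ((l : ℝ) + 1) := by
              apply add_le_add
              · exact mul_le_mul hMKh (add_le_add hB hnorml1) (by positivity) (by linarith)
              · exact mul_le_mul hMa hnormθ (norm_nonneg θ) (by linarith)
          _ = 3 * M * N ^ ((l : ℝ) + 1) := by ring
      calc ‖G‖ * ‖h θ - a • θ‖
          ≤ ((l : ℝ) + 1) * N ^ (p - 1) * (3 * M * N ^ ((l : ℝ) + 1)) :=
            mul_le_mul hGbd hF3 (norm_nonneg _) (by positivity)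
        _ = 3 * ((l : ℝ) + 1) * M * (N ^ (p - 1) * N ^ ((l : ℝ) + 1)) := by ring
        _ = 3 * ((l : ℝ) + 1) * M * N ^ (p + (l : ℝ)) := by rw [hX]
    have t0 : a ≤ M * N ^ (p + (l : ℝ)) := by
      calc a ≤ M := hMa
        _ = M * 1 := (mul_one M).symm
        _ ≤ M * N ^ (p + (l : ℝ)) := mul_le_mul_of_nonneg_left hX1 (by linarith)
    calc ‖D‖ ≤ a + (φ s₀ * ‖H θ - a • ContinuousLinearMap.id ℝ (EuclideanSpace ℝ (Fin d))‖ + ‖G‖ * ‖h θ - a • θ‖) := t1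
      _ ≤ M * N ^ (p + (l : ℝ)) + (3 * M * N ^ (p + (l : ℝ)) +
          3 * ((l : ℝ) + 1) * M * N ^ (p + (l : ℝ))) := add_le_add t0 (add_le_add t2 t3)
      _ = ((3 : ℝ) * l + 7) * M * N ^ (p + (l : ℝ)) := by ring
  have hcoef : ((3 : ℝ) * l + 7) ≤ (10 * Real.sqrt 2 + 4 / eps) * ((l : ℝ) + 1) ^ 2 := by
    have hs2 : (0 : ℝ) ≤ Real.sqrt 2 := Real.sqrt_nonneg 2
    have h4e : (8 : ℝ) ≤ 4 / eps := by
      rw [le_div_iff₀ heps0]; linarith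
    have hll : (1 : ℝ) ≤ (l : ℝ) := by exact_mod_cast hl
    have h8 : (8 : ℝ) ≤ 10 * Real.sqrt 2 + 4 / eps := by linarith
    have h2 : (3 : ℝ) * l + 7 ≤ 8 * ((l : ℝ) + 1) ^ 2 := by
      nlinarith only [hll, sq_nonneg ((l : ℝ) : ℝ)]
    calc (3 : ℝ) * l + 7 ≤ 8 * ((l : ℝ) + 1) ^ 2 := h2
      _ ≤ (10 * Real.sqrt 2 + 4 / eps) * ((l : ℝ) + 1) ^ 2 :=
        mul_le_mul_of_nonneg_right h8 (by positivity)
  calc ‖D‖ ≤ ((3 : ℝ) * l + 7) * M * N ^ (p + (l : ℝ)) := main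
    _ ≤ (10 * Real.sqrt 2 + 4 / eps) * ((l : ℝ) + 1) ^ 2 * M * N ^ (p + (l : ℝ)) := by
        apply mul_le_mul_of_nonneg_right _ (by positivity)
        apply mul_le_mul_of_nonneg_right hcoef (by linarith)
    _ = (10 * Real.sqrt 2 + 4 / eps) * ((l : ℝ) + 1) ^ 2 * M * (1 + ‖θ‖) ^ (p + (l : ℝ)) := rfl
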